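/- arXiv:2011.00197 — 5 statements merged into one kernel-verified Lean document; each statement's English description precedes it below -/
import Mathlib

section
/- Let l ≥ 3 be an integer and let C ⊆ F₂^m be a binary linear code in which every codeword has even Hamming weight. Then Σ_{v∈C} (i tan(2π/2^l))^{w_H(v)} = (sec(2π/2^l))^m holds in ℂ if and only if 2^l divides m − 2·w_H(w) (as integers) for every w ∈ C^⊥. -/
open Matrix Finset

section Aux

open scoped Classical

/-- The sign character on `ZMod 2` with values in `ℂ`. -/
private noncomputable def epsSt7 : ZMod 2 → ℂ := fun a => if a = 0 then 1 else -1

private lemma epsSt7_add (a b : ZMod 2) : epsSt7 (a + b) = epsSt7 a * epsSt7 b := by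
  fin_cases a <;> fin_cases b <;> simp [epsSt7] <;> split_ifs <;> norm_num <;> contradiction

private lemma epsSt7_sum {ι : Type*} (s : Finset ι) (g : ι → ZMod 2) :
    epsSt7 (∑ j ∈ s, g j) = ∏ j ∈ s, epsSt7 (g j) := by
  induction s using Finset.cons_induction with
  | empty => simp [epsSt7]
  | cons a s ha ih => rw [Finset.sum_cons, Finset.prod_cons, epsSt7_add, ih]

private lemma zmod2_eq_one {a : ZMod 2} (h : a ≠ 0) : a = 1 := by
  fin_cases a
  · exact absurd rfl h
  · rfl

/-- The dot-product bilinear form on `F₂^m`. -/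
private noncomputable def dotFormSt7 (m : ℕ) : LinearMap.BilinForm (ZMod 2) (Fin m → ZMod 2) :=
  LinearMap.mk₂ (ZMod 2) (· ⬝ᵥ ·) add_dotProduct smul_dotProduct dotProduct_add dotProduct_smul

private lemma dotFormSt7_apply {m : ℕ} (v w : Fin m → ZMod 2) :
    dotFormSt7 m v w = v ⬝ᵥ w := rfl

private lemma dotFormSt7_nondeg (m : ℕ) : (dotFormSt7 m).Nondegenerate := by
  refine (LinearMap.IsRefl.nondegenerate_iff_separatingLeft
    (fun x y h => by rwa [dotFormSt7_apply, dotProduct_comm] at h)).mpr ?_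
  intro w hw
  funext j
  have := hw (Pi.single j 1)
  rwa [dotFormSt7_apply, dotProduct_single, mul_one] at this

private lemma dotFormSt7_refl (m : ℕ) : (dotFormSt7 m).IsRefl := by
  intro x y h
  rwa [dotFormSt7_apply, dotProduct_comm] at h

/-- Character sum over a subcode vanishes when some element is non-orthogonal to `v`. -/
private lemma char_sum_zero {m : ℕ} (D : Submodule (ZMod 2) (Fin m → ZMod 2))
    (v w₀ : Fin m → ZMod 2) (hw₀ : w₀ ∈ D) (hne : w₀ ⬝ᵥ v ≠ 0) :
    ∑ w ∈ Finset.univ.filter (fun w => w ∈ D), epsSt7 (w ⬝ᵥ v) = 0 := by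
  have hww : w₀ + w₀ = 0 := by
    ext j; exact CharTwo.add_self_eq_zero _
  set S := ∑ w ∈ Finset.univ.filter (fun w => w ∈ D), epsSt7 (w ⬝ᵥ v) with hS
  have key : S = ∑ w ∈ Finset.univ.filter (fun w => w ∈ D), epsSt7 ((w + w₀) ⬝ᵥ v) := by
    rw [hS]
    refine Finset.sum_nbij' (fun w => w + w₀) (fun w => w + w₀) ?_ ?_ ?_ ?_ ?_
    · intro a ha
      simp only [Finset.mem_filter, Finset.mem_univ, true_and] at ha ⊢
      exact D.add_mem ha hw₀
    · intro a ha
      simp only [Finset.mem_filter, Finset.mem_univ, true_and] at ha ⊢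
      exact D.add_mem ha hw₀
    · intro a _
      show a + w₀ + w₀ = a
      rw [add_assoc, hww, add_zero]
    · intro a _
      show a + w₀ + w₀ = a
      rw [add_assoc, hww, add_zero]
    · intro a _
      show epsSt7 (a ⬝ᵥ v) = epsSt7 ((a + w₀ + w₀) ⬝ᵥ v)
      rw [add_assoc, hww, add_zero]
  have hflip : ∀ w : Fin m → ZMod 2, epsSt7 ((w + w₀) ⬝ᵥ v) = - epsSt7 (w ⬝ᵥ v) := by
    intro w
    rw [add_dotProduct, epsSt7_add, zmod2_eq_one hne]
    simp [epsSt7]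
  rw [Finset.sum_congr rfl (fun w _ => hflip w), Finset.sum_neg_distrib] at key
  have h2 : (2 : ℂ) * S = 0 := by linear_combination key
  simpa using h2

end Aux

open scoped Classical in
/-- Lemma 3 of the paper. Let `l ≥ 3` and let `C ⊆ F₂^m` be a binary linear
code in which every codeword has even Hamming weight. Then
`Σ_{v∈C} (i tan(2π/2^l))^{w_H(v)} = (sec(2π/2^l))^m` holds in `ℂ` if and only if
`2^l` divides `m − 2·w_H(w)` (as integers) for every `w` in the dual code `C^⊥`. -/
theorem divisibility_iff_trig_identity (m l : ℕ) (hl : 3 ≤ l)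
    (C : Submodule (ZMod 2) (Fin m → ZMod 2))
    (hev : ∀ v ∈ C, Even (hammingNorm v)) :
    (∑ v ∈ Finset.univ.filter (fun v : Fin m → ZMod 2 => v ∈ C),
        (Complex.I * Real.tan (2 * Real.pi / 2 ^ l)) ^ hammingNorm v
      = ((Real.cos (2 * Real.pi / 2 ^ l) : ℂ))⁻¹ ^ m)
    ↔ ∀ w : Fin m → ZMod 2, (∀ v ∈ C, w ⬝ᵥ v = 0) →
        (2 ^ l : ℤ) ∣ ((m : ℤ) - 2 * (hammingNorm w : ℤ)) := by
  have hπ := Real.pi_pos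
  set θ : ℝ := 2 * Real.pi / 2 ^ l with hθdef
  have h2l : (8 : ℝ) ≤ 2 ^ l := by
    calc (8 : ℝ) = 2 ^ 3 := by norm_num
    _ ≤ 2 ^ l := by exact pow_le_pow_right₀ one_le_two hl
  have h2lpos : (0 : ℝ) < 2 ^ l := by positivity
  have hθpos : 0 < θ := by rw [hθdef]; positivity
  have hθle : θ ≤ Real.pi / 4 := by
    rw [hθdef]
    rw [div_le_div_iff₀ h2lpos (by norm_num)]
    nlinarith
  have hcos : 0 < Real.cos θ := by
    apply Real.cos_pos_of_mem_Ioo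
    constructor <;> [linarith; linarith]
  set t : ℂ := Complex.I * Real.tan θ with htdef
  set c : ℂ := (Real.cos θ : ℂ) with hcdef
  clear_value θ
  have hc0' : (Real.cos θ : ℂ) ≠ 0 := by exact_mod_cast hcos.ne'
  have hc0 : c ≠ 0 := by rw [hcdef]; exact hc0'
  have hccos : Complex.cos (θ : ℂ) ≠ 0 := by rw [← Complex.ofReal_cos]; exact hc0'
  -- the two basic exponential identities
  have key1 : 1 + t = c⁻¹ * Complex.exp ((θ : ℂ) * Complex.I) := by
    rw [Complex.exp_mul_I, ← Complex.ofReal_cos, ← Complex.ofReal_sin, htdef, hcdef,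
      Real.tan_eq_sin_div_cos, Complex.ofReal_div]
    field_simp [hccos]
  have key2 : 1 - t = c⁻¹ * Complex.exp (((-θ : ℝ) : ℂ) * Complex.I) := by
    rw [Complex.exp_mul_I, ← Complex.ofReal_cos, ← Complex.ofReal_sin, Real.cos_neg,
      Real.sin_neg, htdef, hcdef, Real.tan_eq_sin_div_cos, Complex.ofReal_div]
    field_simp [hccos]
    push_cast
    ring
  -- closed form of the coordinate product
  have hwle : ∀ w : Fin m → ZMod 2, hammingNorm w ≤ m := fun w => by
    simpa using hammingNorm_le_card_fintype (x := w)
  have hcard : ∀ w : Fin m → ZMod 2,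
      (Finset.univ.filter (fun j => w j ≠ 0)).card = hammingNorm w := fun w => rfl
  have prod_closed : ∀ w : Fin m → ZMod 2,
      (∏ j, (1 + epsSt7 (w j) * t))
        = (1 + t) ^ (m - hammingNorm w) * (1 - t) ^ hammingNorm w := by
    intro w
    rw [← Finset.prod_filter_mul_prod_filter_not Finset.univ (fun j => w j ≠ 0)]
    have e1 : ∀ j ∈ Finset.univ.filter (fun j => w j ≠ 0), 1 + epsSt7 (w j) * t = 1 - t := by
      intro j hj
      have := (Finset.mem_filter.mp hj).2
      rw [show epsSt7 (w j) = -1 by simp [epsSt7, this]]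
      ring
    have e0 : ∀ j ∈ Finset.univ.filter (fun j => ¬ w j ≠ 0), 1 + epsSt7 (w j) * t = 1 + t := by
      intro j hj
      have := (Finset.mem_filter.mp hj).2
      rw [not_not] at this
      rw [show epsSt7 (w j) = 1 by simp [epsSt7, this]]
      ring
    rw [Finset.prod_congr rfl e1, Finset.prod_congr rfl e0, Finset.prod_const,
      Finset.prod_const, hcard w]
    have hc2 : (Finset.univ.filter (fun j => ¬ w j ≠ 0)).card = m - hammingNorm w := by
      have h := Finset.card_filter_add_card_filter_not
        (s := (Finset.univ : Finset (Fin m))) (p := fun j => w j ≠ 0)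
      rw [hcard w] at h
      simp only [Finset.card_univ, Fintype.card_fin] at h
      omega
    rw [hc2]
    ring
  -- expansion of the coordinate product into a character sum
  have expand : ∀ w : Fin m → ZMod 2,
      (∏ j, (1 + epsSt7 (w j) * t))
        = ∑ v : Fin m → ZMod 2, epsSt7 (w ⬝ᵥ v) * t ^ hammingNorm v := by
    intro w
    have h1 : ∀ j : Fin m, (1 + epsSt7 (w j) * t)
        = ∑ a : ZMod 2, (if a = 0 then 1 else epsSt7 (w j) * t) := by
      intro j
      rw [show (∑ a : ZMod 2, (if a = 0 then 1 else epsSt7 (w j) * t))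
          = (if (0 : ZMod 2) = 0 then 1 else epsSt7 (w j) * t)
            + (if (1 : ZMod 2) = 0 then 1 else epsSt7 (w j) * t) from
        Fin.sum_univ_two _]
      norm_num
    calc (∏ j, (1 + epsSt7 (w j) * t))
        = ∏ j, ∑ a : ZMod 2, (if a = 0 then 1 else epsSt7 (w j) * t) :=
          Finset.prod_congr rfl fun j _ => h1 j
      _ = ∑ v : Fin m → ZMod 2, ∏ j, (if v j = 0 then 1 else epsSt7 (w j) * t) :=
          Fintype.prod_sum _
      _ = ∑ v : Fin m → ZMod 2, epsSt7 (w ⬝ᵥ v) * t ^ hammingNorm v := by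
          refine Finset.sum_congr rfl fun v _ => ?_
          rw [← Finset.prod_filter_mul_prod_filter_not Finset.univ (fun j => v j ≠ 0)]
          have e1 : ∀ j ∈ Finset.univ.filter (fun j => v j ≠ 0),
              (if v j = 0 then 1 else epsSt7 (w j) * t) = epsSt7 (w j) * t := by
            intro j hj
            rw [if_neg (Finset.mem_filter.mp hj).2]
          have e0 : ∏ j ∈ Finset.univ.filter (fun j => ¬ v j ≠ 0),
              (if v j = 0 then 1 else epsSt7 (w j) * t) = 1 := by
            apply Finset.prod_eq_one
            intro j hj
            have := (Finset.mem_filter.mp hj).2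
            rw [not_not] at this
            rw [if_pos this]
          rw [Finset.prod_congr rfl e1, e0, mul_one, Finset.prod_mul_distrib,
            Finset.prod_const, hcard v, ← epsSt7_sum]
          congr 2
          rw [Finset.sum_filter]
          show _ = ∑ j, w j * v j
          refine Finset.sum_congr rfl fun j _ => ?_
          by_cases hv : v j = 0
          · simp [hv]
          · simp [hv, zmod2_eq_one hv]
  -- the dual code
  set D : Submodule (ZMod 2) (Fin m → ZMod 2) := (dotFormSt7 m).orthogonal C with hDdef
  set Df := Finset.univ.filter (fun w : Fin m → ZMod 2 => w ∈ D) with hDfdef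
  set N := Df.card with hNdef
  have hmemD : ∀ w, w ∈ D ↔ ∀ v ∈ C, w ⬝ᵥ v = 0 := by
    intro w
    constructor
    · intro hw v hv
      have h : v ⬝ᵥ w = 0 := hw v hv
      rw [dotProduct_comm]
      exact h
    · intro h v hv
      exact (dotProduct_comm v w).trans (h v hv)
  have hdd : ∀ v : Fin m → ZMod 2, (∀ w ∈ D, w ⬝ᵥ v = 0) ↔ v ∈ C := by
    intro v
    have horth := LinearMap.BilinForm.orthogonal_orthogonal (dotFormSt7_nondeg m)
      (dotFormSt7_refl m) C
    constructor
    · intro h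
      rw [← horth]
      exact fun w hw => h w hw
    · intro hv w hw
      rw [← horth] at hv
      exact hv w hw
  have charD : ∀ v : Fin m → ZMod 2,
      (∑ w ∈ Df, epsSt7 (w ⬝ᵥ v)) = if v ∈ C then (N : ℂ) else 0 := by
    intro v
    by_cases hv : v ∈ C
    · rw [if_pos hv]
      have h1 : ∀ w ∈ Df, epsSt7 (w ⬝ᵥ v) = 1 := by
        intro w hw
        have hwD : w ∈ D := (Finset.mem_filter.mp hw).2
        rw [(hmemD w).mp hwD v hv]
        simp [epsSt7]
      rw [Finset.sum_congr rfl h1, Finset.sum_const, nsmul_eq_mul, mul_one, hNdef]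
    · rw [if_neg hv]
      have hne : ¬ ∀ w ∈ D, w ⬝ᵥ v = 0 := fun h => hv ((hdd v).mp h)
      push_neg at hne
      obtain ⟨w₀, hw₀, hne⟩ := hne
      rw [hDfdef]
      exact char_sum_zero D v w₀ hw₀ hne
  -- closed form with exponentials
  have per_w : ∀ w : Fin m → ZMod 2,
      (∏ j, (1 + epsSt7 (w j) * t))
        = c⁻¹ ^ m * Complex.exp (((θ * ((m : ℝ) - 2 * hammingNorm w)) : ℝ) * Complex.I) := by
    intro w
    rw [prod_closed w, key1, key2, mul_pow, mul_pow,
      ← Complex.exp_nat_mul, ← Complex.exp_nat_mul,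
      mul_mul_mul_comm, pow_sub_mul_pow c⁻¹ (hwle w), ← Complex.exp_add]
    congr 1
    push_cast [Nat.cast_sub (hwle w)]
    ring
  set S := ∑ v ∈ Finset.univ.filter (fun v : Fin m → ZMod 2 => v ∈ C),
      t ^ hammingNorm v with hSdef
  have master : (N : ℂ) * S = c⁻¹ ^ m *
      ∑ w ∈ Df, Complex.exp (((θ * ((m : ℝ) - 2 * hammingNorm w)) : ℝ) * Complex.I) := by
    have L : ∑ w ∈ Df, (∏ j, (1 + epsSt7 (w j) * t)) = (N : ℂ) * S := by
      calc ∑ w ∈ Df, (∏ j, (1 + epsSt7 (w j) * t))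
          = ∑ w ∈ Df, ∑ v : Fin m → ZMod 2, epsSt7 (w ⬝ᵥ v) * t ^ hammingNorm v :=
            Finset.sum_congr rfl fun w _ => expand w
        _ = ∑ v : Fin m → ZMod 2, ∑ w ∈ Df, epsSt7 (w ⬝ᵥ v) * t ^ hammingNorm v :=
            Finset.sum_comm
        _ = ∑ v : Fin m → ZMod 2, (if v ∈ C then (N : ℂ) else 0) * t ^ hammingNorm v := by
            refine Finset.sum_congr rfl fun v _ => ?_
            rw [← Finset.sum_mul, charD v]
        _ = ∑ v : Fin m → ZMod 2,
              (if v ∈ C then (N : ℂ) * t ^ hammingNorm v else 0) := by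
            refine Finset.sum_congr rfl fun v _ => ?_
            by_cases hv : v ∈ C <;> simp [hv]
        _ = ∑ v ∈ Finset.univ.filter (fun v : Fin m → ZMod 2 => v ∈ C),
              (N : ℂ) * t ^ hammingNorm v := (Finset.sum_filter _ _).symm
        _ = (N : ℂ) * S := by rw [hSdef, Finset.mul_sum]
    have R : ∑ w ∈ Df, (∏ j, (1 + epsSt7 (w j) * t))
        = c⁻¹ ^ m *
          ∑ w ∈ Df, Complex.exp (((θ * ((m : ℝ) - 2 * hammingNorm w)) : ℝ) * Complex.I) := by
      rw [Finset.mul_sum]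
      exact Finset.sum_congr rfl fun w _ => per_w w
    rw [← L, R]
  have hN0 : 0 < N := by
    rw [hNdef]
    apply Finset.card_pos.mpr
    exact ⟨0, Finset.mem_filter.mpr ⟨Finset.mem_univ _, D.zero_mem⟩⟩
  have hNC : (N : ℂ) ≠ 0 := Nat.cast_ne_zero.mpr hN0.ne'
  have hcm : (c⁻¹ : ℂ) ^ m ≠ 0 := pow_ne_zero _ (inv_ne_zero hc0)
  have hθ2l : θ * 2 ^ l = 2 * Real.pi := by
    rw [hθdef]
    field_simp
  constructor
  · intro hS w hw
    have hwD : w ∈ D := (hmemD w).mpr hw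
    have hsum : ∑ w' ∈ Df,
        Complex.exp (((θ * ((m : ℝ) - 2 * hammingNorm w')) : ℝ) * Complex.I) = (N : ℂ) := by
      have hm := master
      rw [hS] at hm
      have h2 : c⁻¹ ^ m * (∑ w' ∈ Df,
          Complex.exp (((θ * ((m : ℝ) - 2 * hammingNorm w')) : ℝ) * Complex.I))
          = c⁻¹ ^ m * (N : ℂ) := by rw [← hm]; ring
      exact mul_left_cancel₀ hcm h2
    have hres : ∑ w' ∈ Df, Real.cos (θ * ((m : ℝ) - 2 * hammingNorm w')) = (N : ℝ) := by
      have h := congrArg Complex.re hsum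
      rw [Complex.re_sum] at h
      have h2 : ∀ w' ∈ Df,
          (Complex.exp (((θ * ((m : ℝ) - 2 * hammingNorm w')) : ℝ) * Complex.I)).re
            = Real.cos (θ * ((m : ℝ) - 2 * hammingNorm w')) :=
        fun w' _ => Complex.exp_ofReal_mul_I_re _
      rw [Finset.sum_congr rfl h2] at h
      rw [h]
      exact Complex.natCast_re N
    have hle : ∀ w' ∈ Df, Real.cos (θ * ((m : ℝ) - 2 * hammingNorm w')) ≤ (1 : ℝ) :=
      fun _ _ => Real.cos_le_one _
    have heq : ∀ w' ∈ Df, Real.cos (θ * ((m : ℝ) - 2 * hammingNorm w')) = (1 : ℝ) := by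
      refine (Finset.sum_eq_sum_iff_of_le hle).mp ?_
      rw [hres, Finset.sum_const, nsmul_eq_mul, mul_one]
    have hwDf : w ∈ Df := Finset.mem_filter.mpr ⟨Finset.mem_univ _, hwD⟩
    obtain ⟨n, hn⟩ := (Real.cos_eq_one_iff _).mp (heq w hwDf)
    refine ⟨n, ?_⟩
    have hX : (m : ℝ) - 2 * (hammingNorm w : ℝ) = 2 ^ l * n := by
      have h1 : θ * ((m : ℝ) - 2 * hammingNorm w) = θ * (2 ^ l * n) := by
        rw [← hn, ← hθ2l]
        ring
      exact mul_left_cancel₀ hθpos.ne' h1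
    have : ((m : ℤ) - 2 * (hammingNorm w : ℤ) : ℝ) = ((2 ^ l * n : ℤ) : ℝ) := by
      push_cast
      linarith [hX]
    exact_mod_cast this
  · intro hdiv
    have hz : ∀ w ∈ Df,
        Complex.exp (((θ * ((m : ℝ) - 2 * hammingNorm w)) : ℝ) * Complex.I) = 1 := by
      intro w hw
      have hwD : w ∈ D := (Finset.mem_filter.mp hw).2
      obtain ⟨n, hn⟩ := hdiv w ((hmemD w).mp hwD)
      have hX : (m : ℝ) - 2 * (hammingNorm w : ℝ) = 2 ^ l * n := by
        exact_mod_cast congrArg (Int.cast : ℤ → ℝ) hn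
      have h1 : θ * ((m : ℝ) - 2 * hammingNorm w) = n * (2 * Real.pi) := by
        rw [hX, ← hθ2l]
        ring
      rw [h1]
      have h2 : ((n * (2 * Real.pi) : ℝ) : ℂ) * Complex.I = n * (2 * Real.pi * Complex.I) := by
        push_cast
        ring
      rw [h2, Complex.exp_int_mul_two_pi_mul_I]
    have hsum : ∑ w ∈ Df,
        Complex.exp (((θ * ((m : ℝ) - 2 * hammingNorm w)) : ℝ) * Complex.I) = (N : ℂ) := by
      rw [Finset.sum_congr rfl hz, Finset.sum_const, nsmul_eq_mul, mul_one, hNdef]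
    rw [hsum] at master
    exact mul_left_cancel₀ hNC (master.trans (by ring))
end

section
/- Let l ≥ 3 be an integer, let C ⊆ F₂^m be a binary linear code in which every codeword has even Hamming weight, let ε : C → {±1} be a character of the additive group C, and suppose Σ_{v∈C} ε_v (i tan(2π/2^l))^{w_H(v)} = (sec(2π/2^l))^m. Then: (1) if ε is trivial (ε_v = 1 for all v ∈ C), then 2^l divides m − 2·w_H(w) for every w ∈ C^⊥; (2) if ε is nontrivial and B = {v ∈ C : ε_v = 1}, then 2^l divides m − 2·w_H(w) for every w ∈ B^⊥ ∖ C^⊥. -/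
open Matrix Finset

open scoped Classical

noncomputable def sgn2 (a : ZMod 2) : ℂ := if a = 0 then 1 else -1

lemma zmod2_cases (a : ZMod 2) : a = 0 ∨ a = 1 := by revert a; decide

lemma sgn2_add (a b : ZMod 2) : sgn2 (a + b) = sgn2 a * sgn2 b := by
  rcases zmod2_cases a with ha | ha <;> rcases zmod2_cases b with hb | hb <;>
    subst ha <;> subst hb <;>
    simp [sgn2, show ((1 : ZMod 2) + 1 : ZMod 2) = 0 from by decide]

lemma sgn2_mul_self (a : ZMod 2) : sgn2 a * sgn2 a = 1 := by
  rcases zmod2_cases a with h | h <;> subst h <;> simp [sgn2]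

lemma sgn2_sum {ι : Type*} (S : Finset ι) (v : ι → ZMod 2) :
    (∏ j ∈ S, sgn2 (v j)) = sgn2 (∑ j ∈ S, v j) := by
  induction S using Finset.cons_induction with
  | empty => simp [sgn2]
  | cons a s ha ih => rw [Finset.prod_cons, Finset.sum_cons, sgn2_add, ih]

lemma complex_eq_one_of (z : ℂ) (h1 : ‖z‖ = 1) (h2 : z.re = 1) : z = 1 := by
  have hn : Complex.normSq z = 1 := by
    have := congrArg (fun t : ℝ => t ^ 2) h1
    simpa [Complex.sq_norm] using this
  have hsq : z.re * z.re + z.im * z.im = 1 := by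
    rw [← hn]; simp [Complex.normSq_apply]
  have him : z.im = 0 := by nlinarith
  apply Complex.ext <;> simp [h2, him]

open scoped Classical in
/-- Corollary 4 of the paper. Let `l ≥ 3`, let `C ⊆ F₂^m` be a binary linear
code with all codeword weights even, let `ε : C → {±1}` be a character of the additive group
`C`, and suppose `Σ_{v∈C} ε_v (i tan(2π/2^l))^{w_H(v)} = (sec(2π/2^l))^m`. Then:
(1) if `ε` is trivial, `2^l ∣ m − 2·w_H(w)` for every `w ∈ C^⊥`;
(2) if `ε` is nontrivial and `B = {v ∈ C : ε_v = 1}`, then `2^l ∣ m − 2·w_H(w)` for every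
`w ∈ B^⊥ ∖ C^⊥`. -/
theorem divisibility_with_character (m l : ℕ) (hl : 3 ≤ l)
    (C : Submodule (ZMod 2) (Fin m → ZMod 2))
    (hev : ∀ v ∈ C, Even (hammingNorm v))
    (ε : (Fin m → ZMod 2) → ℂ)
    (hsign : ∀ v ∈ C, ε v = 1 ∨ ε v = -1)
    (hhom : ∀ v ∈ C, ∀ u ∈ C, ε (v + u) = ε v * ε u)
    (hsum : ∑ v ∈ Finset.univ.filter (fun v : Fin m → ZMod 2 => v ∈ C),
        ε v * (Complex.I * Real.tan (2 * Real.pi / 2 ^ l)) ^ hammingNorm v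
      = ((Real.cos (2 * Real.pi / 2 ^ l) : ℂ))⁻¹ ^ m) :
    ((∀ v ∈ C, ε v = 1) →
      ∀ w : Fin m → ZMod 2, (∀ v ∈ C, w ⬝ᵥ v = 0) →
        (2 ^ l : ℤ) ∣ ((m : ℤ) - 2 * (hammingNorm w : ℤ))) ∧
    ((¬ ∀ v ∈ C, ε v = 1) →
      ∀ w : Fin m → ZMod 2, (∀ v ∈ C, ε v = 1 → w ⬝ᵥ v = 0) → (¬ ∀ v ∈ C, w ⬝ᵥ v = 0) →
        (2 ^ l : ℤ) ∣ ((m : ℤ) - 2 * (hammingNorm w : ℤ))) := by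
  classical
  set θ : ℝ := 2 * Real.pi / 2 ^ l with hθdef
  have hπ := Real.pi_pos
  have h2lpos : (0:ℝ) < 2 ^ l := by positivity
  have h2l : (8:ℝ) ≤ 2 ^ l := by
    calc (8:ℝ) = 2 ^ 3 := by norm_num
    _ ≤ 2 ^ l := by exact pow_le_pow_right₀ (by norm_num) hl
  have hθpos : 0 < θ := by rw [hθdef]; positivity
  have hθle : θ ≤ Real.pi / 4 := by
    rw [hθdef, div_le_div_iff₀ h2lpos (by norm_num)]
    nlinarith
  have hcos : 0 < Real.cos θ := by
    apply Real.cos_pos_of_mem_Ioo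
    constructor <;> [linarith; linarith]
  have hcne : (Real.cos θ : ℂ) ≠ 0 := Complex.ofReal_ne_zero.mpr (ne_of_gt hcos)
  set Cfin : Finset (Fin m → ZMod 2) :=
    Finset.univ.filter (fun v : Fin m → ZMod 2 => v ∈ C) with hCfin
  have hmemC : ∀ v : Fin m → ZMod 2, v ∈ Cfin ↔ v ∈ C := by
    intro v; simp [hCfin]
  have hNpos : 0 < Cfin.card := Finset.card_pos.mpr ⟨0, (hmemC 0).mpr C.zero_mem⟩
  have hNne : ((Cfin.card : ℂ)) ≠ 0 := Nat.cast_ne_zero.mpr (Nat.pos_iff_ne_zero.mp hNpos)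
  set E : ℂ := Complex.exp (θ * Complex.I) with hE
  set E' : ℂ := Complex.exp (-(θ * Complex.I)) with hE'
  set z : Finset (Fin m) → ℂ :=
    fun S => Complex.exp ((((m : ℝ) - 2 * S.card) * θ : ℝ) * Complex.I) with hzdef
  set c : Finset (Fin m) → ℂ :=
    fun S => ∑ v ∈ Cfin, ε v * sgn2 (∑ j ∈ S, v j) with hcdef
  set P : Finset (Fin m) → Prop :=
    fun S => ∀ v ∈ C, ε v * sgn2 (∑ j ∈ S, v j) = 1 with hPdef
  set T : Finset (Finset (Fin m)) := (univ : Finset (Fin m)).powerset.filter P with hTdef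
  -- per-coordinate identity
  have hcoord : ∀ a : ZMod 2,
      (if a = 0 then (Real.cos θ : ℂ) else Complex.I * Real.sin θ)
        = (E + sgn2 a * E') / 2 := by
    intro a
    rcases zmod2_cases a with h | h <;> subst h
    · rw [if_pos rfl, Complex.ofReal_cos, Complex.cos]
      simp [sgn2, hE, hE', neg_mul]
    · rw [if_neg (by decide), Complex.ofReal_sin, Complex.sin]
      have hs : sgn2 1 = -1 := by simp [sgn2]
      rw [hs, hE, hE', neg_mul]
      linear_combination (Complex.exp (-((θ:ℂ) * Complex.I))
        - Complex.exp ((θ:ℂ) * Complex.I)) / 2 * Complex.I_sq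
  -- step 1 : product over coordinates equals the tan-power term
  have hprod1 : ∀ v : Fin m → ZMod 2,
      (∏ j, (if v j = 0 then (Real.cos θ : ℂ) else Complex.I * Real.sin θ))
        = (Complex.I * Real.tan θ) ^ hammingNorm v * (Real.cos θ : ℂ) ^ m := by
    intro v
    have hle : hammingNorm v ≤ m := by
      simpa using (hammingNorm_le_card_fintype (x := v))
    have hnorm : (univ.filter fun j => ¬ v j = 0).card = hammingNorm v := by
      unfold hammingNorm; convert rfl using 2
    have hcardeq : (univ.filter fun j => v j = 0).card = m - hammingNorm v := by
      have h := Finset.card_filter_add_card_filter_not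
        (s := (univ : Finset (Fin m))) (p := fun j => v j = 0)
      rw [Finset.card_univ, Fintype.card_fin] at h
      omega
    rw [Finset.prod_ite (fun _ => (Real.cos θ : ℂ)) (fun _ => Complex.I * Real.sin θ),
      Finset.prod_const, Finset.prod_const, hnorm, hcardeq]
    have ht : (Real.tan θ : ℂ) = (Real.sin θ : ℂ) / (Real.cos θ : ℂ) := by
      rw [Real.tan_eq_sin_div_cos]; push_cast; ring
    rw [ht, show Complex.I * ((Real.sin θ : ℂ) / (Real.cos θ : ℂ))
        = (Complex.I * (Real.sin θ : ℂ)) / (Real.cos θ : ℂ) from by ring,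
      div_pow, div_mul_eq_mul_div, eq_div_iff (pow_ne_zero _ hcne)]
    have hpow : (Real.cos θ : ℂ) ^ (m - hammingNorm v) * (Real.cos θ : ℂ) ^ hammingNorm v
        = (Real.cos θ : ℂ) ^ m := by
      rw [← pow_add, Nat.sub_add_cancel hle]
    linear_combination ((Complex.I * (Real.sin θ : ℂ)) ^ hammingNorm v) * hpow
  -- step 2 : Fourier expansion of the product
  have hexpand : ∀ v : Fin m → ZMod 2,
      (∏ j, (if v j = 0 then (Real.cos θ : ℂ) else Complex.I * Real.sin θ))
        = (2:ℂ)⁻¹ ^ m * ∑ S ∈ (univ : Finset (Fin m)).powerset,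
            sgn2 (∑ j ∈ S, v j) * (E ^ (m - S.card) * E' ^ S.card) := by
    intro v
    calc (∏ j, (if v j = 0 then (Real.cos θ : ℂ) else Complex.I * Real.sin θ))
        = ∏ j, ((sgn2 (v j) * E' + E) / 2) := by
          refine Finset.prod_congr rfl fun j _ => ?_
          rw [hcoord (v j)]; ring
      _ = (∏ j, (sgn2 (v j) * E' + E)) / (2:ℂ) ^ m := by
          rw [Finset.prod_div_distrib, Finset.prod_const, Finset.card_univ, Fintype.card_fin]
      _ = (∑ S ∈ (univ : Finset (Fin m)).powerset,
            (∏ j ∈ S, sgn2 (v j) * E') * ∏ j ∈ univ \ S, E) / (2:ℂ) ^ m := by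
          rw [Finset.prod_add]
      _ = (2:ℂ)⁻¹ ^ m * ∑ S ∈ (univ : Finset (Fin m)).powerset,
            sgn2 (∑ j ∈ S, v j) * (E ^ (m - S.card) * E' ^ S.card) := by
          rw [div_eq_mul_inv, mul_comm, ← inv_pow]
          congr 1
          refine Finset.sum_congr rfl fun S hS => ?_
          have hsub : S ⊆ univ := Finset.mem_powerset.mp hS
          rw [Finset.prod_mul_distrib, Finset.prod_const, Finset.prod_const,
            Finset.card_sdiff_of_subset hsub, Finset.card_univ, Fintype.card_fin, sgn2_sum]
          ring
  -- step 3 : E-powers are z S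
  have hzeq : ∀ S ∈ (univ : Finset (Fin m)).powerset,
      E ^ (m - S.card) * E' ^ S.card = z S := by
    intro S hS
    have hcard : S.card ≤ m := by
      simpa using Finset.card_le_card (Finset.mem_powerset.mp hS)
    rw [hE, hE', ← Complex.exp_nat_mul, ← Complex.exp_nat_mul, ← Complex.exp_add, hzdef]
    congr 1
    push_cast [Nat.cast_sub hcard]
    ring
  -- orthogonality over the full cube
  have horth : ∀ t : Fin m → ZMod 2,
      (∑ S ∈ (univ : Finset (Fin m)).powerset, sgn2 (∑ j ∈ S, t j))
        = if t = 0 then (2:ℂ) ^ m else 0 := by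
    intro t
    have h1 : ∀ S ∈ (univ : Finset (Fin m)).powerset,
        sgn2 (∑ j ∈ S, t j) = (∏ j ∈ S, sgn2 (t j)) * ∏ j ∈ univ \ S, (1:ℂ) := by
      intro S _
      rw [sgn2_sum, Finset.prod_const_one, mul_one]
    rw [Finset.sum_congr rfl h1, ← Finset.prod_add]
    by_cases ht : t = 0
    · subst ht
      rw [if_pos rfl]
      have h2 : ∀ j : Fin m, sgn2 ((0 : Fin m → ZMod 2) j) + 1 = 2 := by
        intro j; simp [sgn2]; norm_num
      rw [Finset.prod_congr rfl (fun j _ => h2 j), Finset.prod_const, Finset.card_univ,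
        Fintype.card_fin]
    · rw [if_neg ht]
      obtain ⟨j0, hj0⟩ : ∃ j, t j ≠ 0 := by
        by_contra h; push_neg at h; exact ht (funext h)
      apply Finset.prod_eq_zero (Finset.mem_univ j0)
      have h3 : t j0 = 1 := by
        rcases zmod2_cases (t j0) with h | h
        · exact absurd h hj0
        · exact h
      rw [h3]; simp [sgn2]
  -- char sum vanishes unless P
  have hcs0 : ∀ S : Finset (Fin m), ¬ P S → c S = 0 := by
    intro S hPS
    simp only [hPdef] at hPS
    push_neg at hPS
    obtain ⟨u, huC, hune⟩ := hPS
    have hk2 : (ε u * sgn2 (∑ j ∈ S, u j)) * (ε u * sgn2 (∑ j ∈ S, u j)) = 1 := by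
      have h1 : ε u * ε u = 1 := by
        rcases hsign u huC with h | h <;> rw [h] <;> ring
      have h2 := sgn2_mul_self (∑ j ∈ S, u j)
      calc (ε u * sgn2 (∑ j ∈ S, u j)) * (ε u * sgn2 (∑ j ∈ S, u j))
          = (ε u * ε u) * (sgn2 (∑ j ∈ S, u j) * sgn2 (∑ j ∈ S, u j)) := by ring
        _ = 1 := by rw [h1, h2, mul_one]
    have hstep : c S = (ε u * sgn2 (∑ j ∈ S, u j)) * c S := by
      rw [hcdef]
      simp only []
      rw [Finset.mul_sum]
      apply Finset.sum_nbij' (i := fun v => u + v) (j := fun v => u + v)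
      · intro a ha
        exact (hmemC _).mpr (C.add_mem huC ((hmemC _).mp ha))
      · intro a ha
        exact (hmemC _).mpr (C.add_mem huC ((hmemC _).mp ha))
      · intro a _
        ext j
        simp [← add_assoc, CharTwo.add_self_eq_zero]
      · intro a _
        ext j
        simp [← add_assoc, CharTwo.add_self_eq_zero]
      · intro a ha
        have haC := (hmemC _).mp ha
        rw [hhom u huC a haC]
        have hsplit : (∑ j ∈ S, (u + a) j) = (∑ j ∈ S, u j) + ∑ j ∈ S, a j := by
          simp [Finset.sum_add_distrib]
        rw [hsplit, sgn2_add]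
        have : ε u * sgn2 (∑ j ∈ S, u j) * (ε u * ε a * (sgn2 (∑ j ∈ S, u j)
            * sgn2 (∑ j ∈ S, a j)))
            = ((ε u * sgn2 (∑ j ∈ S, u j)) * (ε u * sgn2 (∑ j ∈ S, u j)))
              * (ε a * sgn2 (∑ j ∈ S, a j)) := by ring
        rw [this, hk2, one_mul]
    have h0 : (1 - ε u * sgn2 (∑ j ∈ S, u j)) * c S = 0 := by linear_combination hstep
    rcases mul_eq_zero.mp h0 with h | h
    · exact absurd (by linear_combination -h) hune
    · exact h
  have hcsN : ∀ S : Finset (Fin m), P S → c S = (Cfin.card : ℂ) := by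
    intro S hPS
    rw [hcdef]
    simp only []
    rw [Finset.sum_congr rfl (fun v hv => hPS v ((hmemC v).mp hv))]
    simp
  -- Plancherel
  have hplanch : (∑ S ∈ (univ : Finset (Fin m)).powerset, c S * c S)
      = (2:ℂ) ^ m * (Cfin.card : ℂ) := by
    have hterm : ∀ S : Finset (Fin m), c S * c S
        = ∑ v ∈ Cfin, ∑ u ∈ Cfin, (ε v * ε u) * sgn2 (∑ j ∈ S, (v + u) j) := by
      intro S
      rw [hcdef]
      simp only []
      rw [Finset.sum_mul_sum]
      refine Finset.sum_congr rfl fun v _ => Finset.sum_congr rfl fun u _ => ?_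
      have hsplit : (∑ j ∈ S, (v + u) j) = (∑ j ∈ S, v j) + ∑ j ∈ S, u j := by
        simp [Finset.sum_add_distrib]
      rw [hsplit, sgn2_add]
      ring
    calc (∑ S ∈ (univ : Finset (Fin m)).powerset, c S * c S)
        = ∑ S ∈ (univ : Finset (Fin m)).powerset, ∑ v ∈ Cfin, ∑ u ∈ Cfin,
            (ε v * ε u) * sgn2 (∑ j ∈ S, (v + u) j) :=
          Finset.sum_congr rfl fun S _ => hterm S
      _ = ∑ v ∈ Cfin, ∑ u ∈ Cfin, ∑ S ∈ (univ : Finset (Fin m)).powerset,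
            (ε v * ε u) * sgn2 (∑ j ∈ S, (v + u) j) := by
          rw [Finset.sum_comm]
          exact Finset.sum_congr rfl fun v _ => Finset.sum_comm
      _ = ∑ v ∈ Cfin, ∑ u ∈ Cfin, (ε v * ε u) * (if v + u = 0 then (2:ℂ) ^ m else 0) := by
          refine Finset.sum_congr rfl fun v _ => Finset.sum_congr rfl fun u _ => ?_
          rw [← Finset.mul_sum, horth]
      _ = ∑ v ∈ Cfin, (2:ℂ) ^ m := by
          refine Finset.sum_congr rfl fun v hv => ?_
          have hvv : ∀ u : Fin m → ZMod 2, v + u = 0 ↔ u = v := by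
            intro u
            constructor
            · intro h
              have h2 : v + (v + u) = v + 0 := by rw [h]
              have hvv0 : v + v = 0 := by ext j; exact CharTwo.add_self_eq_zero _
              rw [← add_assoc, add_zero, hvv0, zero_add] at h2
              exact h2
            · intro h; subst h; ext j; exact CharTwo.add_self_eq_zero _
          have hite : ∀ u ∈ Cfin, (ε v * ε u) * (if v + u = 0 then (2:ℂ) ^ m else 0)
              = if u = v then (ε v * ε u) * (2:ℂ) ^ m else 0 := by
            intro u _
            by_cases h : u = v
            · rw [if_pos ((hvv u).mpr h), if_pos h]
            · rw [if_neg (fun hh => h ((hvv u).mp hh)), if_neg h, mul_zero]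
          rw [Finset.sum_congr rfl hite, Finset.sum_ite_eq' Cfin v, if_pos hv]
          rcases hsign v ((hmemC v).mp hv) with h | h <;> rw [h] <;> ring
      _ = (2:ℂ) ^ m * (Cfin.card : ℂ) := by
          rw [Finset.sum_const, nsmul_eq_mul]; ring
  -- main equation from hsum
  have hmain : (2:ℂ) ^ m = ∑ S ∈ (univ : Finset (Fin m)).powerset, c S * z S := by
    have h1 : (∑ v ∈ Cfin, ε v * ((Complex.I * Real.tan θ) ^ hammingNorm v
        * (Real.cos θ : ℂ) ^ m)) = 1 := by
      have h := congrArg (fun t : ℂ => t * (Real.cos θ : ℂ) ^ m) hsum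
      simp only [Finset.sum_mul] at h
      calc (∑ v ∈ Cfin, ε v * ((Complex.I * Real.tan θ) ^ hammingNorm v
              * (Real.cos θ : ℂ) ^ m))
          = ∑ v ∈ Cfin, ε v * (Complex.I * Real.tan θ) ^ hammingNorm v
              * (Real.cos θ : ℂ) ^ m :=
            Finset.sum_congr rfl fun v _ => by ring
        _ = ((Real.cos θ : ℂ))⁻¹ ^ m * (Real.cos θ : ℂ) ^ m := h
        _ = 1 := by rw [← mul_pow, inv_mul_cancel₀ hcne, one_pow]
    have h2 : (∑ v ∈ Cfin, ε v * ((2:ℂ)⁻¹ ^ m * ∑ S ∈ (univ : Finset (Fin m)).powerset,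
        sgn2 (∑ j ∈ S, v j) * z S)) = 1 := by
      rw [← h1]
      refine Finset.sum_congr rfl fun v _ => ?_
      congr 1
      rw [← hprod1 v, hexpand v]
      congr 1
      exact Finset.sum_congr rfl fun S hS => by rw [hzeq S hS]
    have h3 : (∑ v ∈ Cfin, ε v * ((2:ℂ)⁻¹ ^ m * ∑ S ∈ (univ : Finset (Fin m)).powerset,
        sgn2 (∑ j ∈ S, v j) * z S))
        = (2:ℂ)⁻¹ ^ m * ∑ S ∈ (univ : Finset (Fin m)).powerset, c S * z S := by
      calc (∑ v ∈ Cfin, ε v * ((2:ℂ)⁻¹ ^ m * ∑ S ∈ (univ : Finset (Fin m)).powerset,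
              sgn2 (∑ j ∈ S, v j) * z S))
          = ∑ v ∈ Cfin, ∑ S ∈ (univ : Finset (Fin m)).powerset,
              (2:ℂ)⁻¹ ^ m * (ε v * sgn2 (∑ j ∈ S, v j) * z S) := by
            refine Finset.sum_congr rfl fun v _ => ?_
            rw [Finset.mul_sum, Finset.mul_sum]
            exact Finset.sum_congr rfl fun S _ => by ring
        _ = ∑ S ∈ (univ : Finset (Fin m)).powerset, ∑ v ∈ Cfin,
              (2:ℂ)⁻¹ ^ m * (ε v * sgn2 (∑ j ∈ S, v j) * z S) := Finset.sum_comm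
        _ = (2:ℂ)⁻¹ ^ m * ∑ S ∈ (univ : Finset (Fin m)).powerset, c S * z S := by
            rw [Finset.mul_sum]
            refine Finset.sum_congr rfl fun S _ => ?_
            rw [hcdef]
            simp only []
            rw [Finset.sum_mul, Finset.mul_sum]
    have h4 : (2:ℂ)⁻¹ ^ m * ∑ S ∈ (univ : Finset (Fin m)).powerset, c S * z S = 1 := by
      rw [← h3, h2]
    have h5 : ((2:ℂ) ^ m * (2:ℂ)⁻¹ ^ m)
        * (∑ S ∈ (univ : Finset (Fin m)).powerset, c S * z S) = (2:ℂ) ^ m := by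
      rw [mul_assoc, h4, mul_one]
    have h6 : ((2:ℂ) ^ m * (2:ℂ)⁻¹ ^ m) = 1 := by
      rw [← mul_pow]; norm_num
    rw [h6, one_mul] at h5
    exact h5.symm
  -- split over T
  have hsplit : (∑ S ∈ (univ : Finset (Fin m)).powerset, c S * z S)
      = (Cfin.card : ℂ) * ∑ S ∈ T, z S := by
    rw [← Finset.sum_filter_add_sum_filter_not ((univ : Finset (Fin m)).powerset) P]
    have hz0 : (∑ S ∈ (univ : Finset (Fin m)).powerset.filter (fun S => ¬ P S), c S * z S)
        = 0 := by
      apply Finset.sum_eq_zero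
      intro S hS
      rw [hcs0 S (Finset.mem_filter.mp hS).2, zero_mul]
    rw [hz0, add_zero, hTdef, Finset.mul_sum]
    exact Finset.sum_congr rfl fun S hS => by
      rw [hcsN S (Finset.mem_filter.mp hS).2]
  have hsplit2 : (∑ S ∈ (univ : Finset (Fin m)).powerset, c S * c S)
      = (T.card : ℂ) * ((Cfin.card : ℂ) * (Cfin.card : ℂ)) := by
    rw [← Finset.sum_filter_add_sum_filter_not ((univ : Finset (Fin m)).powerset) P]
    have hz0 : (∑ S ∈ (univ : Finset (Fin m)).powerset.filter (fun S => ¬ P S), c S * c S)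
        = 0 := by
      apply Finset.sum_eq_zero
      intro S hS
      rw [hcs0 S (Finset.mem_filter.mp hS).2, zero_mul]
    rw [hz0, add_zero, hTdef]
    have hcongr : (∑ S ∈ (univ : Finset (Fin m)).powerset.filter P, c S * c S)
        = ∑ _S ∈ (univ : Finset (Fin m)).powerset.filter P,
            (Cfin.card : ℂ) * (Cfin.card : ℂ) :=
      Finset.sum_congr rfl fun S hS => by rw [hcsN S (Finset.mem_filter.mp hS).2]
    rw [hcongr, Finset.sum_const, nsmul_eq_mul]
  -- count : T.card * N = 2^m
  have hcount : (T.card : ℂ) * (Cfin.card : ℂ) = (2:ℂ) ^ m := by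
    have h := hsplit2.symm.trans hplanch
    have h2 : ((T.card : ℂ) * (Cfin.card : ℂ)) * (Cfin.card : ℂ)
        = ((2:ℂ) ^ m) * (Cfin.card : ℂ) := by
      rw [mul_assoc, h]
    exact mul_right_cancel₀ hNne h2
  -- sum of unit vectors equals cardinality
  have hzsum : (∑ S ∈ T, z S) = (T.card : ℂ) := by
    have h := hmain.trans hsplit
    rw [← hcount] at h
    have h2 : (Cfin.card : ℂ) * (∑ S ∈ T, z S) = (Cfin.card : ℂ) * (T.card : ℂ) := by
      rw [← h]; ring
    exact mul_left_cancel₀ hNne h2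
  have habs : ∀ S : Finset (Fin m), ‖z S‖ = 1 := by
    intro S
    rw [hzdef]
    exact Complex.norm_exp_ofReal_mul_I _
  have hre1 : ∀ S ∈ T, (z S).re = 1 := by
    have hsumre : (∑ S ∈ T, (z S).re) = ∑ S ∈ T, (1:ℝ) := by
      have h := congrArg Complex.re hzsum
      rw [Complex.re_sum] at h
      simpa using h
    intro S hS
    exact (Finset.sum_eq_sum_iff_of_le
      (fun i _ => (Complex.re_le_norm (z i)).trans_eq (habs i))).mp hsumre S hS
  have hz1 : ∀ S ∈ T, z S = 1 := fun S hS => complex_eq_one_of _ (habs S) (hre1 S hS)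
  -- divisibility for S ∈ T
  have hdvd : ∀ S ∈ T, (2 ^ l : ℤ) ∣ ((m : ℤ) - 2 * (S.card : ℤ)) := by
    intro S hS
    have h := hz1 S hS
    rw [hzdef] at h
    rw [Complex.exp_eq_one_iff] at h
    obtain ⟨n, hn⟩ := h
    have hn2 : ((((m : ℝ) - 2 * S.card) * θ : ℝ) : ℂ) = (n : ℂ) * (2 * Real.pi) := by
      apply mul_right_cancel₀ Complex.I_ne_zero
      rw [hn]; push_cast; ring
    have hn3 : ((m : ℝ) - 2 * S.card) * θ = (n : ℝ) * (2 * Real.pi) := by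
      exact_mod_cast hn2
    have hn4 : ((m : ℝ) - 2 * S.card) = (n : ℝ) * 2 ^ l := by
      rw [hθdef] at hn3
      have hπne : (2 * Real.pi) ≠ 0 := by positivity
      field_simp at hn3
      nlinarith [hn3, Real.pi_pos]
    have hn5 : ((m : ℤ) - 2 * (S.card : ℤ)) = n * 2 ^ l := by
      exact_mod_cast hn4
    exact ⟨n, by linarith [hn5]⟩
  -- key glue
  have hkey : ∀ w : Fin m → ZMod 2,
      (∀ v ∈ C, ε v * sgn2 (w ⬝ᵥ v) = 1) →
      (2 ^ l : ℤ) ∣ ((m : ℤ) - 2 * (hammingNorm w : ℤ)) := by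
    intro w hw
    set S : Finset (Fin m) := univ.filter (fun j => ¬ w j = 0) with hSdef
    have hScard : S.card = hammingNorm w := by
      rw [hSdef]; unfold hammingNorm; convert rfl using 2
    have hdot : ∀ v : Fin m → ZMod 2, (∑ j ∈ S, v j) = w ⬝ᵥ v := by
      intro v
      have h1 : (∑ j ∈ S, v j) = ∑ j ∈ S, w j * v j := by
        refine Finset.sum_congr rfl fun j hj => ?_
        have hj1 : w j = 1 := by
          have := (Finset.mem_filter.mp hj).2
          rcases zmod2_cases (w j) with h | h
          · exact absurd h this
          · exact h
        rw [hj1, one_mul]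
      have h2 : (∑ j ∈ S, w j * v j) = ∑ j, w j * v j := by
        apply Finset.sum_subset (Finset.subset_univ S)
        intro j _ hj
        have : w j = 0 := by
          by_contra hne
          exact hj (Finset.mem_filter.mpr ⟨Finset.mem_univ j, hne⟩)
        rw [this, zero_mul]
      rw [h1, h2]
      rfl
    have hST : S ∈ T := by
      rw [hTdef]
      refine Finset.mem_filter.mpr ⟨Finset.mem_powerset.mpr (Finset.subset_univ S), ?_⟩
      rw [hPdef]
      intro v hv
      rw [hdot v]
      exact hw v hv
    have := hdvd S hST
    rwa [hScard] at this
  constructor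
  · intro htriv w hw
    apply hkey
    intro v hv
    rw [htriv v hv, hw v hv, one_mul]
    simp [sgn2]
  · intro hnt w hB hnC
    apply hkey
    intro v hv
    push_neg at hnC
    obtain ⟨u, huC, hune⟩ := hnC
    have hεu : ε u = -1 := by
      rcases hsign u huC with h | h
      · exact absurd (hB u huC h) hune
      · exact h
    rcases hsign v hv with h1 | h1
    · rw [h1, hB v hv h1, one_mul]
      simp [sgn2]
    · have hadd : ε (v + u) = 1 := by
        rw [hhom v hv u huC, h1, hεu]; ring
      have hvu0 : w ⬝ᵥ (v + u) = 0 := hB _ (C.add_mem hv huC) hadd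
      have hlin : w ⬝ᵥ (v + u) = w ⬝ᵥ v + w ⬝ᵥ u := dotProduct_add w v u
      have hu1 : w ⬝ᵥ u = 1 := by
        rcases zmod2_cases (w ⬝ᵥ u) with h | h
        · exact absurd h hune
        · exact h
      have hv1 : w ⬝ᵥ v = 1 := by
        rw [hlin, hu1] at hvu0
        rcases zmod2_cases (w ⬝ᵥ v) with h | h
        · rw [h] at hvu0; norm_num at hvu0
        · exact h
      rw [h1, hv1]
      simp [sgn2]
end

section
/- Let m ≥ 1, let W = {v ∈ F₂^m : w_H(v) is even} be the even-weight (single-parity-check) code of length m, let y ∈ F₂^m, let l ≥ 3 be an integer, and set γ = 2π(m − 2·w_H(y))/2^l ∈ ℝ. Then Σ_{v∈W} (−1)^{y·v} (i tan(2π/2^l))^{w_H(v)} = cos(γ) · (sec(2π/2^l))^m. -/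
open Matrix Finset


lemma chi_add (a b : ZMod 2) : (-1:ℂ)^(a+b).val = (-1)^a.val * (-1)^b.val := by
  rw [ZMod.val_add, ← neg_one_pow_eq_pow_mod_two, pow_add]

lemma chi_sum {ι : Type*} (s : Finset ι) (f : ι → ZMod 2) :
    (-1:ℂ)^((∑ j ∈ s, f j).val) = ∏ j ∈ s, (-1:ℂ)^(f j).val := by
  induction s using Finset.cons_induction with
  | empty => simp
  | cons a s ha ih => rw [Finset.sum_cons, chi_add, ih, Finset.prod_cons]

lemma norm_eq_sum {m : ℕ} (v : Fin m → ZMod 2) : hammingNorm v = ∑ j, (v j).val := by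
  rw [hammingNorm, Finset.card_filter]
  refine Finset.sum_congr rfl fun j _ => ?_
  generalize v j = a; revert a; decide

lemma factorize {m : ℕ} (y v : Fin m → ZMod 2) (c : ℂ) :
    (-1 : ℂ) ^ (y ⬝ᵥ v).val * c ^ hammingNorm v
      = ∏ j, ((-1:ℂ)^((y j * v j).val) * c^(v j).val) := by
  rw [dotProduct, chi_sum, norm_eq_sum, ← Finset.prod_pow_eq_pow_sum,
    ← Finset.prod_mul_distrib]

lemma F_eval {m : ℕ} (y : Fin m → ZMod 2) (c : ℂ) :
    ∑ v : Fin m → ZMod 2, (-1 : ℂ) ^ (y ⬝ᵥ v).val * c ^ hammingNorm v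
      = (1+c)^(m - hammingNorm y) * (1-c)^(hammingNorm y) := by
  simp_rw [factorize]
  have hpi := Finset.prod_univ_sum (κ := fun _ : Fin m => ZMod 2)
    (t := fun _ => (univ : Finset (ZMod 2)))
    (f := fun j x => (-1:ℂ)^((y j * x).val) * c^x.val)
  rw [Fintype.piFinset_univ] at hpi
  rw [← hpi]
  have step : ∀ j, (∑ x : ZMod 2, (-1:ℂ)^((y j * x).val) * c^(x:ZMod 2).val)
      = 1 + (-1:ℂ)^((y j).val) * c := by
    intro j
    rw [show (univ : Finset (ZMod 2)) = {0, 1} by decide]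
    simp [show (1 : ZMod 2).val = 1 from rfl]
  simp_rw [step]
  rw [← Finset.prod_filter_mul_prod_filter_not univ (fun j => y j ≠ 0)]
  have h1 : ∀ j ∈ univ.filter (fun j => y j ≠ 0), (1 + (-1:ℂ)^((y j).val) * c) = 1 - c := by
    intro j hj
    have : (y j).val = 1 := by
      have := (Finset.mem_filter.mp hj).2
      generalize y j = a at *; revert this; revert a; decide
    rw [this]; ring
  have h0 : ∀ j ∈ univ.filter (fun j => ¬ y j ≠ 0), (1 + (-1:ℂ)^((y j).val) * c) = 1 + c := by
    intro j hj
    have : (y j).val = 0 := by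
      have := (Finset.mem_filter.mp hj).2
      generalize y j = a at *; revert this; revert a; decide
    rw [this]; ring
  rw [Finset.prod_congr rfl h1, Finset.prod_congr rfl h0, Finset.prod_const, Finset.prod_const]
  have hcard : (univ.filter (fun j => y j ≠ 0)).card = hammingNorm y := rfl
  have hcard2 : (univ.filter (fun j => ¬ y j ≠ 0)).card = m - hammingNorm y := by
    have := Finset.card_filter_add_card_filter_not (s := (univ : Finset (Fin m)))
      (p := fun j => y j ≠ 0)
    simp only [Finset.card_univ, Fintype.card_fin] at this
    omega
  rw [hcard, hcard2, mul_comm]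

lemma cos_as_exp (x : ℝ) :
    ((Real.cos x : ℂ)) = (Complex.exp (x * Complex.I) + Complex.exp (-x * Complex.I)) / 2 := by
  rw [Complex.ofReal_cos, Complex.cos]

/-- Let `W` be the even-weight (single-parity-check) code of length `m`,
`y ∈ F₂^m`, `l ≥ 3`, and `γ = 2π(m − 2·w_H(y))/2^l`. Then
`Σ_{v∈W} (−1)^{y·v} (i tan(2π/2^l))^{w_H(v)} = cos(γ) · (sec(2π/2^l))^m`. -/
theorem weight2_spc_even_sum (m : ℕ) (hm : 1 ≤ m) (y : Fin m → ZMod 2) (l : ℕ) (hl : 3 ≤ l) :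
    ∑ v ∈ Finset.univ.filter (fun v : Fin m → ZMod 2 => Even (hammingNorm v)),
        (-1 : ℂ) ^ (y ⬝ᵥ v).val *
          (Complex.I * Real.tan (2 * Real.pi / 2 ^ l)) ^ hammingNorm v
      = (Real.cos (2 * Real.pi * ((m : ℝ) - 2 * (hammingNorm y : ℝ)) / 2 ^ l) : ℂ) *
          ((Real.cos (2 * Real.pi / 2 ^ l) : ℂ))⁻¹ ^ m := by
  set θ : ℝ := 2 * Real.pi / 2 ^ l with hθ
  set t : ℂ := Complex.I * Real.tan θ with ht
  set k : ℕ := hammingNorm y with hk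
  have hkm : k ≤ m := by
    simpa [hk, hammingNorm] using Finset.card_filter_le (univ : Finset (Fin m)) (fun j => y j ≠ 0)
  -- cos θ positive
  have hθpos : 0 < θ := by
    apply div_pos (by positivity) (by positivity)
  have hθlt : θ < Real.pi / 2 := by
    rw [hθ, div_lt_div_iff₀ (by positivity) (by norm_num)]
    have : (8:ℝ) ≤ 2 ^ l := by
      calc (8:ℝ) = 2^3 := by norm_num
      _ ≤ 2^l := by exact pow_le_pow_right₀ (by norm_num) hl
    nlinarith [Real.pi_pos]
  have hcos : 0 < Real.cos θ := Real.cos_pos_of_mem_Ioo ⟨by linarith, hθlt⟩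
  have hC : ((Real.cos θ : ℂ)) ≠ 0 := by
    exact_mod_cast Complex.ofReal_ne_zero.mpr hcos.ne'
  set C : ℂ := (Real.cos θ : ℂ) with hCdef
  -- even filter trick
  have heven : ∑ v ∈ Finset.univ.filter (fun v : Fin m → ZMod 2 => Even (hammingNorm v)),
      (-1 : ℂ) ^ (y ⬝ᵥ v).val * t ^ hammingNorm v
      = ((∑ v : Fin m → ZMod 2, (-1 : ℂ) ^ (y ⬝ᵥ v).val * t ^ hammingNorm v)
        + (∑ v : Fin m → ZMod 2, (-1 : ℂ) ^ (y ⬝ᵥ v).val * (-t) ^ hammingNorm v)) / 2 := by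
    rw [Finset.sum_filter, ← Finset.sum_add_distrib, Finset.sum_div]
    refine Finset.sum_congr rfl fun v _ => ?_
    rcases Nat.even_or_odd (hammingNorm v) with h | h
    · rw [if_pos h, h.neg_pow]; ring
    · rw [if_neg (Nat.not_even_iff_odd.mpr h), h.neg_pow]; ring
  rw [heven, F_eval, F_eval, ← hk, sub_neg_eq_add, ← sub_eq_add_neg]
  -- trig endgame
  set E : ℂ := Complex.exp (θ * Complex.I) with hE
  set E' : ℂ := Complex.exp (-θ * Complex.I) with hE'
  have hCc : C = Complex.cos θ := Complex.ofReal_cos θ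
  have hCc0 : Complex.cos θ ≠ 0 := hCc ▸ hC
  have h1 : 1 + t = E / C := by
    rw [hE, ht, hCc, Complex.exp_mul_I, Real.tan_eq_sin_div_cos]
    push_cast
    field_simp
  have h2 : 1 - t = E' / C := by
    rw [hE', ht, hCc, Complex.exp_mul_I, Real.tan_eq_sin_div_cos, Complex.cos_neg,
      Complex.sin_neg]
    push_cast
    field_simp
    ring
  rw [h1, h2]
  simp only [div_pow, div_mul_div_comm, ← pow_add]
  have hx : ∀ (a b : ℕ), E ^ a * E' ^ b = Complex.exp ((((a:ℝ):ℂ) - ((b:ℝ):ℂ)) * θ * Complex.I) := by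
    intro a b
    rw [hE, hE', ← Complex.exp_nat_mul, ← Complex.exp_nat_mul, ← Complex.exp_add]
    push_cast
    ring_nf
  set γ : ℝ := 2 * Real.pi * ((m : ℝ) - 2 * (k : ℝ)) / 2 ^ l with hγ
  have hγθ : γ = ((m:ℝ) - 2*k) * θ := by rw [hγ, hθ]; ring
  have hnum : E ^ (m-k) * E' ^ k + E' ^ (m-k) * E ^ k = 2 * ((Real.cos γ : ℂ)) := by
    rw [mul_comm (E' ^ (m-k)), hx, hx, cos_as_exp]
    rw [show ((((m-k:ℕ):ℝ):ℂ) - ((k:ℝ):ℂ)) * (θ:ℂ) * Complex.I = (γ:ℂ) * Complex.I by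
      rw [hγθ]; push_cast [Nat.cast_sub hkm]; ring]
    rw [show ((((k:ℕ):ℝ):ℂ) - (((m-k:ℕ):ℝ):ℂ)) * (θ:ℂ) * Complex.I = -(γ:ℂ) * Complex.I by
      rw [hγθ]; push_cast [Nat.cast_sub hkm]; ring]
    ring
  rw [← add_div, hnum, Nat.sub_add_cancel hkm]
  have hCm : C ^ m ≠ 0 := pow_ne_zero _ hC
  field_simp
  rw [one_div, inv_pow, mul_assoc, mul_inv_cancel₀ hCm, mul_one]
end

section
/- Let m ≥ 1, let y ∈ F₂^m, let l ≥ 3 be an integer, and set γ = 2π(m − 2·w_H(y))/2^l ∈ ℝ. Then the sum over all odd-weight vectors satisfies Σ_{v ∈ F₂^m, w_H(v) odd} (−1)^{y·v} (i tan(2π/2^l))^{w_H(v)} = i·sin(γ) · (sec(2π/2^l))^m. -/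
open Matrix Finset

private lemma chi_sum' (m : ℕ) (c : Fin m → ZMod 2) :
    ((-1:ℂ))^((∑ j, c j).val) = ∏ j, (-1:ℂ)^((c j).val) := by
  rw [Finset.prod_pow_eq_pow_sum]
  have h : (∑ j, c j) = ((∑ j, (c j).val : ℕ) : ZMod 2) := by
    push_cast
    exact Finset.sum_congr rfl fun j _ => (ZMod.natCast_rightInverse (c j)).symm
  rw [h, ZMod.val_natCast, ← neg_one_pow_eq_pow_mod_two]

private lemma full_sum' (m : ℕ) (y : Fin m → ZMod 2) (t : ℂ) :
    ∑ v : Fin m → ZMod 2, (-1:ℂ)^((y ⬝ᵥ v).val) * t ^ hammingNorm v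
      = (1+t)^(m - hammingNorm y) * (1-t)^(hammingNorm y) := by
  have hterm : ∀ v : Fin m → ZMod 2, (-1:ℂ)^((y ⬝ᵥ v).val) * t ^ hammingNorm v
      = ∏ j, ((-1:ℂ)^((y j * v j).val) * t ^ (if v j ≠ 0 then 1 else 0)) := by
    intro v
    rw [Finset.prod_mul_distrib]
    congr 1
    · exact chi_sum' m fun j => y j * v j
    · rw [Finset.prod_pow_eq_pow_sum]
      congr 1
      rw [hammingNorm, Finset.card_filter]
  have key := Fintype.prod_sum (f := fun (j : Fin m) (a : ZMod 2) =>
    (-1:ℂ)^((y j * a).val) * t ^ (if a ≠ 0 then 1 else 0))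
  rw [Finset.sum_congr rfl fun v _ => hterm v, ← key]
  have hfac : ∀ j, (∑ a : ZMod 2, ((-1:ℂ)^((y j * a).val) * t ^ (if a ≠ 0 then 1 else 0)))
      = 1 + (-1:ℂ)^((y j).val) * t := by
    intro j
    have : (Finset.univ : Finset (ZMod 2)) = {0, 1} := by decide
    rw [this, Finset.sum_insert (by decide), Finset.sum_singleton]
    norm_num
  rw [Finset.prod_congr rfl fun j _ => hfac j,
    ← Finset.prod_filter_mul_prod_filter_not Finset.univ (fun j => y j ≠ 0)]
  have h1 : ∀ j ∈ Finset.univ.filter (fun j => y j ≠ 0),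
      (1 + (-1:ℂ)^((y j).val) * t) = 1 - t := by
    intro j hj
    simp only [Finset.mem_filter] at hj
    have h2 := ZMod.val_lt (y j)
    have h0 : (y j).val ≠ 0 := fun h => hj.2 ((ZMod.val_eq_zero _).mp h)
    have hv : (y j).val = 1 := by omega
    rw [hv]; ring
  have h2 : ∀ j ∈ Finset.univ.filter (fun j => ¬ y j ≠ 0),
      (1 + (-1:ℂ)^((y j).val) * t) = 1 + t := by
    intro j hj
    simp only [Finset.mem_filter, not_not] at hj
    rw [hj.2]
    norm_num
  rw [Finset.prod_congr rfl h1, Finset.prod_congr rfl h2, Finset.prod_const, Finset.prod_const]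
  have hcard1 : (Finset.univ.filter (fun j => y j ≠ 0)).card = hammingNorm y := rfl
  have hcard2 : (Finset.univ.filter (fun j => ¬ y j ≠ 0)).card = m - hammingNorm y := by
    have := Finset.card_filter_add_card_filter_not (s := (Finset.univ : Finset (Fin m)))
      (p := fun j => y j ≠ 0)
    simp only [Finset.card_univ, Fintype.card_fin] at this
    omega
  rw [hcard1, hcard2, mul_comm]

private lemma one_add_I_tan' (θ : ℝ) (hc : Real.cos θ ≠ 0) :
    (1:ℂ) + Complex.I * Real.tan θ = Complex.exp (θ * Complex.I) / Real.cos θ := by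
  rw [Complex.exp_mul_I, Real.tan_eq_sin_div_cos]
  push_cast
  have hc' : Complex.cos θ ≠ 0 := by
    rw [← Complex.ofReal_cos]
    exact Complex.ofReal_ne_zero.mpr hc
  field_simp

private lemma one_sub_I_tan' (θ : ℝ) (hc : Real.cos θ ≠ 0) :
    (1:ℂ) - Complex.I * Real.tan θ = Complex.exp (-((θ:ℂ) * Complex.I)) / Real.cos θ := by
  have h : -((θ:ℂ) * Complex.I) = ((-θ : ℝ) : ℂ) * Complex.I := by push_cast; ring
  rw [h, Complex.exp_mul_I, Real.tan_eq_sin_div_cos]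
  push_cast
  rw [Complex.cos_neg, Complex.sin_neg]
  have hc' : Complex.cos θ ≠ 0 := by
    rw [← Complex.ofReal_cos]
    exact Complex.ofReal_ne_zero.mpr hc
  field_simp
  ring

private lemma exp_sub_exp' (γ : ℝ) :
    Complex.exp (γ * Complex.I) - Complex.exp (-(γ * Complex.I))
      = 2 * Complex.I * Real.sin γ := by
  rw [Complex.ofReal_sin, Complex.sin]
  ring_nf
  rw [Complex.I_sq]
  ring

/-- For `y ∈ F₂^m`, `l ≥ 3`, and `γ = 2π(m − 2·w_H(y))/2^l`, the sum over
all odd-weight vectors satisfies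
`Σ_{v odd} (−1)^{y·v} (i tan(2π/2^l))^{w_H(v)} = i·sin(γ) · (sec(2π/2^l))^m`. -/
theorem weight2_spc_odd_sum (m : ℕ) (hm : 1 ≤ m) (y : Fin m → ZMod 2) (l : ℕ) (hl : 3 ≤ l) :
    ∑ v ∈ Finset.univ.filter (fun v : Fin m → ZMod 2 => Odd (hammingNorm v)),
        (-1 : ℂ) ^ (y ⬝ᵥ v).val *
          (Complex.I * Real.tan (2 * Real.pi / 2 ^ l)) ^ hammingNorm v
      = Complex.I * (Real.sin (2 * Real.pi * ((m : ℝ) - 2 * (hammingNorm y : ℝ)) / 2 ^ l) : ℂ) *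
          ((Real.cos (2 * Real.pi / 2 ^ l) : ℂ))⁻¹ ^ m := by
  set θ : ℝ := 2 * Real.pi / 2 ^ l with hθdef
  have hpi := Real.pi_pos
  have h2l : (8:ℝ) ≤ 2 ^ l := by
    calc (8:ℝ) = 2 ^ 3 := by norm_num
    _ ≤ 2 ^ l := by
        apply pow_le_pow_right₀ (by norm_num) hl
  have hθpos : 0 < θ := by
    apply div_pos (by linarith) (by positivity)
  have hθlt : θ < Real.pi / 2 := by
    rw [hθdef, div_lt_iff₀ (by positivity)]
    nlinarith
  have hcos : 0 < Real.cos θ := Real.cos_pos_of_mem_Ioo ⟨by linarith, hθlt⟩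
  have hcne : Real.cos θ ≠ 0 := ne_of_gt hcos
  have hcneC : (Real.cos θ : ℂ) ≠ 0 := Complex.ofReal_ne_zero.mpr hcne
  set x : ℂ := Complex.I * Real.tan θ with hxdef
  set w : ℕ := hammingNorm y with hwdef
  have hwle : w ≤ m := by
    have := hammingNorm_le_card_fintype (x := y)
    simpa using this
  set f : (Fin m → ZMod 2) → ℂ → ℂ :=
    fun v t => (-1:ℂ)^((y ⬝ᵥ v).val) * t ^ hammingNorm v with hfdef
  set γ : ℝ := θ * ((m : ℝ) - 2 * w) with hγdef
  -- The doubled odd sum: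
  have hdiff : (∑ v : Fin m → ZMod 2, f v x) - (∑ v : Fin m → ZMod 2, f v (-x))
      = 2 * ∑ v ∈ Finset.univ.filter (fun v : Fin m → ZMod 2 => Odd (hammingNorm v)), f v x := by
    rw [← Finset.sum_filter_add_sum_filter_not Finset.univ
        (fun v : Fin m → ZMod 2 => Odd (hammingNorm v)) (fun v => f v x),
      ← Finset.sum_filter_add_sum_filter_not Finset.univ
        (fun v : Fin m → ZMod 2 => Odd (hammingNorm v)) (fun v => f v (-x))]
    have e1 : ∀ v ∈ Finset.univ.filter (fun v : Fin m → ZMod 2 => Odd (hammingNorm v)),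
        f v (-x) = - f v x := by
      intro v hv
      simp only [Finset.mem_filter] at hv
      simp only [hfdef]
      rw [hv.2.neg_pow]
      ring
    have e2 : ∀ v ∈ Finset.univ.filter (fun v : Fin m → ZMod 2 => ¬ Odd (hammingNorm v)),
        f v (-x) = f v x := by
      intro v hv
      simp only [Finset.mem_filter, Nat.not_odd_iff_even] at hv
      simp only [hfdef]
      rw [hv.2.neg_pow]
    rw [Finset.sum_congr rfl e1, Finset.sum_congr rfl e2, Finset.sum_neg_distrib]
    ring
  have hSx : (∑ v : Fin m → ZMod 2, f v x)
      = Complex.exp (γ * Complex.I) / (Real.cos θ : ℂ) ^ m := by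
    rw [hfdef]
    rw [full_sum' m y x, hxdef, one_add_I_tan' θ hcne, one_sub_I_tan' θ hcne,
      div_pow, div_pow, div_mul_div_comm, ← pow_add, Nat.sub_add_cancel hwle,
      ← Complex.exp_nat_mul, ← Complex.exp_nat_mul, ← Complex.exp_add]
    congr 1
    rw [← hwdef]
    push_cast [Nat.cast_sub hwle]
    rw [hγdef]
    push_cast
    ring
  have hSnx : (∑ v : Fin m → ZMod 2, f v (-x))
      = Complex.exp (-(γ * Complex.I)) / (Real.cos θ : ℂ) ^ m := by
    rw [hfdef]
    have h1 : (1:ℂ) + -x = 1 - x := by ring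
    have h2 : (1:ℂ) - -x = 1 + x := by ring
    rw [full_sum' m y (-x), h1, h2, hxdef, one_add_I_tan' θ hcne, one_sub_I_tan' θ hcne,
      div_pow, div_pow, div_mul_div_comm, ← pow_add, Nat.sub_add_cancel hwle,
      ← Complex.exp_nat_mul, ← Complex.exp_nat_mul, ← Complex.exp_add]
    congr 1
    rw [← hwdef]
    push_cast [Nat.cast_sub hwle]
    rw [hγdef]
    push_cast
    ring
  have hsin := exp_sub_exp' γ
  have hγ' : 2 * Real.pi * ((m : ℝ) - 2 * (w : ℝ)) / 2 ^ l = γ := by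
    rw [hγdef, hθdef]; ring
  rw [hγ']
  have h2O : 2 * ∑ v ∈ Finset.univ.filter (fun v : Fin m → ZMod 2 => Odd (hammingNorm v)), f v x
      = 2 * Complex.I * Real.sin γ / (Real.cos θ : ℂ) ^ m := by
    rw [← hdiff, hSx, hSnx, div_sub_div_same, hsin]
  have hgoal : (∑ v ∈ Finset.univ.filter (fun v : Fin m → ZMod 2 => Odd (hammingNorm v)), f v x)
      = Complex.I * Real.sin γ * ((Real.cos θ : ℂ))⁻¹ ^ m := by
    rw [inv_pow]
    linear_combination h2O / 2
  exact hgoal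
end

section
/- Let m ≥ 1, let y ∈ F₂^m, let B ⊆ F₂^m be a binary linear code all of whose codewords have even Hamming weight, and set ε_v = (−1)^{y·v}. Suppose that for every integer l ≥ 3, Σ_{v∈B} ε_v (i tan(2π/2^l))^{w_H(v)} = (sec(2π/2^l))^m. Then Σ_{v∈B, w_H(v)=2} ε_v = −m/2 (as rational numbers). In particular m is even and B contains at least m/2 codewords v of Hamming weight 2 with ε_v = −1. -/
open Matrix Finset

open scoped Classical in
/-- the weight-2 count in the necessity proof of Theorem 8.
Let `B ⊆ F₂^m` be a binary linear code with all codeword weights even and `ε_v = (−1)^{y·v}`.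
If `Σ_{v∈B} ε_v (i tan(2π/2^l))^{w_H(v)} = (sec(2π/2^l))^m` for every `l ≥ 3`, then
`Σ_{v∈B, w_H(v)=2} ε_v = −m/2`; in particular `m` is even and `B` contains at least `m/2`
codewords of Hamming weight 2 with `ε_v = −1`. -/
theorem weight_two_stabilizer_count (m : ℕ) (hm : 1 ≤ m) (y : Fin m → ZMod 2)
    (B : Submodule (ZMod 2) (Fin m → ZMod 2))
    (hev : ∀ v ∈ B, Even (hammingNorm v))
    (hsum : ∀ l : ℕ, 3 ≤ l →
      ∑ v ∈ Finset.univ.filter (fun v : Fin m → ZMod 2 => v ∈ B),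
          (-1 : ℂ) ^ (y ⬝ᵥ v).val *
            (Complex.I * Real.tan (2 * Real.pi / 2 ^ l)) ^ hammingNorm v
        = ((Real.cos (2 * Real.pi / 2 ^ l) : ℂ))⁻¹ ^ m) :
    (∑ v ∈ Finset.univ.filter (fun v : Fin m → ZMod 2 => v ∈ B ∧ hammingNorm v = 2),
        (-1 : ℂ) ^ (y ⬝ᵥ v).val = -(m : ℂ) / 2) ∧
    Even m ∧
    m ≤ 2 * (Finset.univ.filter (fun v : Fin m → ZMod 2 =>
        v ∈ B ∧ hammingNorm v = 2 ∧ y ⬝ᵥ v = 1)).card := by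
  have pi_pos := Real.pi_pos
  set θ : ℕ → ℝ := fun l => 2 * Real.pi / 2 ^ l with hθ
  have hθpos : ∀ l, 0 < θ l := by
    intro l; have : (0:ℝ) < 2 ^ l := by positivity
    simp only [hθ]; positivity
  have hθlt : ∀ l, 3 ≤ l → θ l < Real.pi / 2 := by
    intro l hl
    have h8 : (8:ℝ) ≤ 2 ^ l := by
      calc (8:ℝ) = 2 ^ 3 := by norm_num
      _ ≤ 2 ^ l := by exact pow_le_pow_right₀ (by norm_num) hl
    have h2 : (0:ℝ) < 2 ^ l := by positivity
    have : θ l ≤ 2 * Real.pi / 8 := by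
      apply div_le_div_of_nonneg_left (by positivity) (by norm_num) h8
    nlinarith
  have hcos : ∀ l, 3 ≤ l → 0 < Real.cos (θ l) :=
    fun l hl => Real.cos_pos_of_mem_Ioo ⟨by linarith [hθpos l], hθlt l hl⟩
  have htanpos : ∀ l, 3 ≤ l → 0 < Real.tan (θ l) :=
    fun l hl => Real.tan_pos_of_pos_of_lt_pi_div_two (hθpos l) (hθlt l hl)
  have htanmono : ∀ k l, 3 ≤ k → k < l → Real.tan (θ l) < Real.tan (θ k) := by
    intro k l hk hkl
    have hθlk : θ l < θ k := by
      have : (2:ℝ) ^ k < 2 ^ l := by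
        exact pow_lt_pow_right₀ (by norm_num) hkl
      exact div_lt_div_of_pos_left (by positivity) (by positivity) this
    exact Real.tan_lt_tan_of_nonneg_of_lt_pi_div_two (hθpos l).le (hθlt k hk) hθlk
  -- the polynomial
  set Bs : Finset (Fin m → ZMod 2) := Finset.univ.filter (fun v => v ∈ B) with hBs
  set ε : (Fin m → ZMod 2) → ℂ := fun v => (-1 : ℂ) ^ (y ⬝ᵥ v).val with hε
  set P : Polynomial ℂ := ∑ v ∈ Bs, Polynomial.C (ε v) * Polynomial.X ^ (hammingNorm v / 2)
    with hP
  have hweven : ∀ v ∈ Bs, Even (hammingNorm v) := by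
    intro v hv; exact hev v (by simpa [hBs] using hv)
  -- evaluation of P at -(tan θ)^2
  have heval : ∀ l, 3 ≤ l →
      P.eval ((-(Real.tan (θ l))^2 : ℝ) : ℂ) = ((Real.cos (θ l) : ℂ))⁻¹ ^ m := by
    intro l hl
    rw [hP, Polynomial.eval_finset_sum]
    rw [← hsum l hl]
    apply Finset.sum_congr rfl
    intro v hv
    obtain ⟨k, hk⟩ := hweven v hv
    have hk2 : hammingNorm v = 2 * k := by omega
    have hdiv : hammingNorm v / 2 = k := by omega
    simp only [Polynomial.eval_mul, Polynomial.eval_C, Polynomial.eval_pow, Polynomial.eval_X]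
    congr 1
    rw [hdiv, hk2, pow_mul]
    have : ((-(Real.tan (θ l))^2 : ℝ) : ℂ) = (Complex.I * (Real.tan (θ l) : ℂ))^2 := by
      rw [mul_pow, Complex.I_sq, Complex.ofReal_neg, Complex.ofReal_pow]; ring
    rw [this]
  -- the polynomial identity P * P = (1 - X)^m
  have hroot : ∀ l, 3 ≤ l →
      (P * P - (1 - Polynomial.X) ^ m).IsRoot ((-(Real.tan (θ l))^2 : ℝ) : ℂ) := by
    intro l hl
    have hc := hcos l hl
    have hcne : (Real.cos (θ l) : ℂ) ≠ 0 := by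
      exact_mod_cast hc.ne'
    have h1x : (1 : ℂ) - ((-(Real.tan (θ l))^2 : ℝ) : ℂ)
        = (((Real.cos (θ l))^2)⁻¹ : ℝ) := by
      rw [← Real.inv_one_add_tan_sq hc.ne', inv_inv]
      push_cast
      ring
    simp only [Polynomial.IsRoot, Polynomial.eval_sub, Polynomial.eval_mul,
      Polynomial.eval_pow, Polynomial.eval_one, Polynomial.eval_X, heval l hl, h1x]
    have h2 : ((((Real.cos (θ l))^2)⁻¹ : ℝ) : ℂ)
        = ((Real.cos (θ l) : ℂ))⁻¹ * ((Real.cos (θ l) : ℂ))⁻¹ := by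
      push_cast
      rw [sq, mul_inv]
    rw [h2, mul_pow]
    ring
  have hA : P * P - (1 - Polynomial.X) ^ m = 0 := by
    apply Polynomial.eq_zero_of_infinite_isRoot
    refine Set.infinite_of_injective_forall_mem
      (f := fun n : ℕ => ((-(Real.tan (θ (n + 3)))^2 : ℝ) : ℂ)) ?_ ?_
    · intro a b hab
      by_contra hne
      have key : ∀ p q : ℕ, p < q →
          ((-(Real.tan (θ (p + 3)))^2 : ℝ) : ℂ) ≠ ((-(Real.tan (θ (q + 3)))^2 : ℝ) : ℂ) := by
        intro p q hpq h
        have h1 : -(Real.tan (θ (p + 3)))^2 = -(Real.tan (θ (q + 3)))^2 := by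
          exact_mod_cast h
        have h2 := htanmono (p + 3) (q + 3) (by omega) (by omega)
        have h3 := htanpos (q + 3) (by omega)
        nlinarith
      rcases Nat.lt_or_ge a b with h | h
      · exact key a b h hab
      · exact key b a (by omega) hab.symm
    · intro n
      exact hroot (n + 3) (by omega)
  have hPP : P * P = (1 - Polynomial.X) ^ m := by
    rwa [sub_eq_zero] at hA
  -- coefficient 0 of P is 1
  have hzeroB : (0 : Fin m → ZMod 2) ∈ Bs := by
    simp [hBs]
  have hc0 : P.coeff 0 = 1 := by
    rw [hP, Polynomial.finset_sum_coeff]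
    have : ∀ v ∈ Bs, (Polynomial.C (ε v) * Polynomial.X ^ (hammingNorm v / 2)).coeff 0
        = if v = 0 then 1 else 0 := by
      intro v hv
      rw [Polynomial.coeff_C_mul, Polynomial.coeff_X_pow]
      by_cases h : v = 0
      · subst h
        simp [hε, hammingNorm_zero, dotProduct_zero]
      · have h1 : hammingNorm v ≠ 0 := by
          simpa [hammingNorm_eq_zero] using h
        obtain ⟨k, hk⟩ := hweven v hv
        have : hammingNorm v / 2 ≠ 0 := by omega
        simp [this, Ne.symm this, h]
    rw [Finset.sum_congr rfl this, Finset.sum_ite_eq' Bs 0 (fun _ => (1:ℂ))]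
    simp [hzeroB]
  have hPne : P ≠ 0 := by
    intro h; rw [h] at hc0; simp at hc0
  have hP0 : P.eval 0 = 1 := by rw [← Polynomial.coeff_zero_eq_eval_zero]; exact hc0
  -- degrees
  have hdeg1X : (1 - Polynomial.X : Polynomial ℂ).natDegree = 1 := by
    have : (1 - Polynomial.X : Polynomial ℂ) = -(Polynomial.X - Polynomial.C 1) := by
      rw [Polynomial.C_1]; ring
    rw [this, Polynomial.natDegree_neg, Polynomial.natDegree_X_sub_C]
  set d := P.natDegree with hd
  have hmd : d + d = m := by
    have h1 : (P * P).natDegree = d + d := Polynomial.natDegree_mul hPne hPne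
    have h2 : ((1 - Polynomial.X : Polynomial ℂ) ^ m).natDegree = m := by
      rw [Polynomial.natDegree_pow, hdeg1X, mul_one]
    rw [hPP, h2] at h1; omega
  -- P = (1 - X)^d
  have hfac : (P - (1 - Polynomial.X) ^ d) * (P + (1 - Polynomial.X) ^ d) = 0 := by
    have : (P - (1 - Polynomial.X) ^ d) * (P + (1 - Polynomial.X) ^ d)
        = P * P - ((1 - Polynomial.X) ^ d * (1 - Polynomial.X) ^ d) := by ring
    rw [this, hPP, ← pow_add, hmd, sub_self]
  have hPeq : P = (1 - Polynomial.X) ^ d := by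
    rcases mul_eq_zero.1 hfac with h | h
    · rwa [sub_eq_zero] at h
    · exfalso
      have := congrArg (Polynomial.eval 0) h
      simp [hP0] at this
  -- coefficient 1
  have hcoeff1R : ((1 - Polynomial.X : Polynomial ℂ) ^ d).coeff 1 = -(d : ℂ) := by
    have h1 : ((1 - Polynomial.X : Polynomial ℂ) ^ d).coeff 1
        = (Polynomial.derivative ((1 - Polynomial.X : Polynomial ℂ) ^ d)).coeff 0 := by
      rw [Polynomial.coeff_derivative]; ring
    rw [h1, Polynomial.coeff_zero_eq_eval_zero, Polynomial.derivative_pow]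
    simp
  have hcoeff1 : P.coeff 1 = ∑ v ∈ Finset.univ.filter
      (fun v : Fin m → ZMod 2 => v ∈ B ∧ hammingNorm v = 2), ε v := by
    rw [hP, Polynomial.finset_sum_coeff]
    rw [Finset.sum_filter, Finset.sum_filter]
    apply Finset.sum_congr rfl
    intro v _
    by_cases hvB : v ∈ B
    · have hvBs : v ∈ Bs := by simp [hBs, hvB]
      obtain ⟨k, hk⟩ := hweven v hvBs
      rw [Polynomial.coeff_C_mul, Polynomial.coeff_X_pow]
      by_cases h2 : hammingNorm v = 2
      · simp [hvB, h2]
      · have : hammingNorm v / 2 ≠ 1 := by omega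
        simp [hvB, h2, Ne.symm this, this]
    · simp [hvB]
  have hsum2 : ∑ v ∈ Finset.univ.filter
      (fun v : Fin m → ZMod 2 => v ∈ B ∧ hammingNorm v = 2), ε v = -(d : ℂ) := by
    rw [← hcoeff1, hPeq, hcoeff1R]
  -- counting
  set S := Finset.univ.filter (fun v : Fin m → ZMod 2 => v ∈ B ∧ hammingNorm v = 2) with hS
  have hcases : ∀ x : ZMod 2, x = 0 ∨ x = 1 := by decide
  have hεval : ∀ v, ε v = if y ⬝ᵥ v = 1 then -1 else 1 := by
    intro v
    rcases hcases (y ⬝ᵥ v) with h | h <;> rw [hε] <;> simp [h, ZMod.val_one]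
  have hsplit : ∑ v ∈ S, ε v
      = -((S.filter (fun v => y ⬝ᵥ v = 1)).card : ℂ)
        + ((S.filter (fun v => ¬ y ⬝ᵥ v = 1)).card : ℂ) := by
    rw [← Finset.sum_filter_add_sum_filter_not S (fun v => y ⬝ᵥ v = 1)]
    congr 1
    · rw [Finset.sum_congr rfl (fun v hv => by
        rw [hεval v, if_pos (Finset.mem_filter.1 hv).2])]
      simp [mul_comm]
    · rw [Finset.sum_congr rfl (fun v hv => by
        rw [hεval v, if_neg (Finset.mem_filter.1 hv).2])]
      simp
  have hcardeq : (S.filter (fun v => y ⬝ᵥ v = 1)).card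
      = (S.filter (fun v => ¬ y ⬝ᵥ v = 1)).card + d := by
    have h := hsplit.symm.trans hsum2
    have : ((S.filter (fun v => y ⬝ᵥ v = 1)).card : ℂ)
        = ((S.filter (fun v => ¬ y ⬝ᵥ v = 1)).card : ℂ) + (d : ℂ) := by
      linear_combination -h
    exact_mod_cast this
  have hfilt : Finset.univ.filter (fun v : Fin m → ZMod 2 =>
      v ∈ B ∧ hammingNorm v = 2 ∧ y ⬝ᵥ v = 1) = S.filter (fun v => y ⬝ᵥ v = 1) := by
    rw [hS, Finset.filter_filter]
    apply Finset.filter_congr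
    intro v _
    tauto
  refine ⟨?_, ⟨d, hmd.symm⟩, ?_⟩
  · rw [hsum2]
    rw [← hmd]
    push_cast
    ring
  · rw [hfilt, hcardeq]
    omega
end
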